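/- Let E ⊆ {1,...,m} and let w be a word which pseudo-mixes E with contraction factor τ ∈ (0,1). Then there exists a vector x of norm 1 with support exactly E, and a constant c > 0, such that for every k ≥ 1 and every norm-1 nonnegative vector v with support E, d_H(v·w^k, x) ≤ c·τ^k. -/

import Mathlib

/-- l1 norm of a vector in ℝ^m. -/
noncomputable def l1 {m : ℕ} (v : Fin m → ℝ) : ℝ := ∑ i, |v i|

/-- Support of a vector: the set of indices where it is positive. -/
noncomputable def supp {m : ℕ} (v : Fin m → ℝ) : Finset (Fin m) :=
  Finset.univ.filter fun i => 0 < v i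

/-- Hilbert projective distance between two vectors with common nonempty support `E`. -/
noncomputable def dH {m : ℕ} (E : Finset (Fin m)) (hE : E.Nonempty) (u v : Fin m → ℝ) : ℝ :=
  Real.log (E.sup' hE fun i => u i / v i) + Real.log (E.sup' hE fun i => v i / u i)


/-- Product of matrices along a word. -/
noncomputable def Mprod {A : Type*} {m : ℕ} (M : A → Matrix (Fin m) (Fin m) ℝ)
    (w : List A) : Matrix (Fin m) (Fin m) ℝ := (w.map M).prod

/-- Action of a word on a subset of indices: `E · w = supp(v_E M_w)`. -/
noncomputable def Eact {A : Type*} {m : ℕ} (M : A → Matrix (Fin m) (Fin m) ℝ)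
    (E : Finset (Fin m)) (w : List A) : Finset (Fin m) :=
  supp (Matrix.vecMul (fun i => if i ∈ E then (1 : ℝ) else 0) (Mprod M w))

/-- `w` pseudo-mixes `E`: `E·w = E` and each singleton of `E` is sent to `E` or `∅`. -/
def PseudoMixes {A : Type*} {m : ℕ} (M : A → Matrix (Fin m) (Fin m) ℝ)
    (E : Finset (Fin m)) (w : List A) : Prop :=
  Eact M E w = E ∧ ∀ i ∈ E, Eact M {i} w = E ∨ Eact M {i} w = ∅

/-- positive exactly on E -/
def PosOn {m : ℕ} (E : Finset (Fin m)) (v : Fin m → ℝ) : Prop :=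
  (∀ i ∈ E, 0 < v i) ∧ ∀ i ∉ E, v i = 0

lemma posOn_iff {m : ℕ} (E : Finset (Fin m)) (v : Fin m → ℝ) :
    PosOn E v ↔ (0 ≤ v ∧ supp v = E) := by
  constructor
  · rintro ⟨h1, h2⟩
    constructor
    · intro i
      by_cases hi : i ∈ E
      · exact (h1 i hi).le
      · exact (h2 i hi).ge
    · ext i
      simp only [supp, Finset.mem_filter, Finset.mem_univ, true_and]
      constructor
      · intro hpos
        by_contra hi
        exact absurd (h2 i hi) hpos.ne'
      · exact h1 i
  · rintro ⟨h1, h2⟩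
    constructor
    · intro i hi
      have : i ∈ supp v := h2 ▸ hi
      simpa [supp] using this
    · intro i hi
      have : i ∉ supp v := h2 ▸ hi
      simp only [supp, Finset.mem_filter, Finset.mem_univ, true_and, not_lt] at this
      exact le_antisymm this (h1 i)

section dHlem
variable {m : ℕ} {E : Finset (Fin m)} {u v x : Fin m → ℝ}

lemma sup'_ratio_pos (hE : E.Nonempty) (hu : PosOn E u) (hv : PosOn E v) :
    0 < E.sup' hE fun i => u i / v i := by
  obtain ⟨i, hi⟩ := id hE
  exact lt_of_lt_of_le (div_pos (hu.1 i hi) (hv.1 i hi))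
    (Finset.le_sup' (fun i => u i / v i) hi)

lemma dH_symm (hE : E.Nonempty) : dH E hE u v = dH E hE v u := by
  unfold dH; ring

lemma exp_dH (hE : E.Nonempty) (hu : PosOn E u) (hv : PosOn E v) :
    Real.exp (dH E hE u v) =
      (E.sup' hE fun i => u i / v i) * (E.sup' hE fun i => v i / u i) := by
  rw [dH, Real.exp_add, Real.exp_log (sup'_ratio_pos hE hu hv),
    Real.exp_log (sup'_ratio_pos hE hv hu)]

lemma dH_nonneg (hE : E.Nonempty) (hu : PosOn E u) (hv : PosOn E v) : 0 ≤ dH E hE u v := by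
  have h := exp_dH hE hu hv
  obtain ⟨i, hi⟩ := id hE
  have hui := hu.1 i hi
  have hvi := hv.1 i hi
  have h1 : (1:ℝ) = (u i / v i) * (v i / u i) := by field_simp
  have h2 : (u i / v i) * (v i / u i) ≤
      (E.sup' hE fun i => u i / v i) * (E.sup' hE fun i => v i / u i) :=
    mul_le_mul (Finset.le_sup' (fun i => u i / v i) hi)
      (Finset.le_sup' (fun i => v i / u i) hi)
      (div_nonneg hvi.le hui.le) (sup'_ratio_pos hE hu hv).le
  have : (1:ℝ) ≤ Real.exp (dH E hE u v) := by rw [h]; linarith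
  have := Real.log_le_log (by norm_num) this
  simpa using this

lemma dH_triangle (hE : E.Nonempty) (hu : PosOn E u) (hv : PosOn E v) (hx : PosOn E x) :
    dH E hE u x ≤ dH E hE u v + dH E hE v x := by
  have key : ∀ (p q r : Fin m → ℝ), PosOn E p → PosOn E q → PosOn E r →
      Real.log (E.sup' hE fun i => p i / r i) ≤
      Real.log (E.sup' hE fun i => p i / q i) + Real.log (E.sup' hE fun i => q i / r i) := by
    intro p q r hp hq hr
    have hs1 := sup'_ratio_pos hE hp hq
    have hs2 := sup'_ratio_pos hE hq hr
    rw [← Real.log_mul hs1.ne' hs2.ne']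
    apply Real.log_le_log (sup'_ratio_pos hE hp hr)
    apply Finset.sup'_le
    intro i hi
    have h1 : p i / r i = (p i / q i) * (q i / r i) := by
      rw [div_mul_div_comm, mul_comm (p i) (q i), mul_div_mul_left _ _ (hq.1 i hi).ne']
    rw [h1]
    exact mul_le_mul (Finset.le_sup' (fun i => p i / q i) hi)
      (Finset.le_sup' (fun i => q i / r i) hi)
      (div_nonneg (hq.1 i hi).le (hr.1 i hi).le) hs1.le
  have k1 := key u v x hu hv hx
  have k2 := key x v u hx hv hu
  unfold dH
  linarith

lemma sup'_const_mul (hE : E.Nonempty) {c : ℝ} (hc : 0 < c) (f : Fin m → ℝ) :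
    (E.sup' hE fun i => c * f i) = c * E.sup' hE f := by
  apply le_antisymm
  · exact Finset.sup'_le _ _ fun i hi =>
      mul_le_mul_of_nonneg_left (Finset.le_sup' _ hi) hc.le
  · rw [← le_div_iff₀' hc]
    apply Finset.sup'_le
    intro i hi
    rw [le_div_iff₀' hc]
    exact Finset.le_sup' (fun i => c * f i) hi

lemma dH_smul_left (hE : E.Nonempty) {c : ℝ} (hc : 0 < c) (hu : PosOn E u) (hv : PosOn E v) :
    dH E hE (c • u) v = dH E hE u v := by
  have h1 : (E.sup' hE fun i => (c • u) i / v i) = c * E.sup' hE fun i => u i / v i := by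
    rw [← sup'_const_mul hE hc]
    apply Finset.sup'_congr hE rfl
    intro i _
    simp [mul_div_assoc]
  have h2 : (E.sup' hE fun i => v i / (c • u) i) = c⁻¹ * E.sup' hE fun i => v i / u i := by
    rw [← sup'_const_mul hE (inv_pos.mpr hc)]
    apply Finset.sup'_congr hE rfl
    intro i _
    simp only [Pi.smul_apply, smul_eq_mul]
    rw [div_mul_eq_div_div_swap, div_eq_inv_mul (v i / u i) c]
  rw [dH, dH, h1, h2, Real.log_mul hc.ne' (sup'_ratio_pos hE hu hv).ne',
    Real.log_mul (inv_ne_zero hc.ne') (sup'_ratio_pos hE hv hu).ne', Real.log_inv]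
  ring

lemma posOn_smul {c : ℝ} (hc : 0 < c) (hu : PosOn E u) : PosOn E (c • u) := by
  constructor
  · intro i hi; exact mul_pos hc (hu.1 i hi)
  · intro i hi; simp [hu.2 i hi]
end dHlem

section cmp
variable {m : ℕ} {E : Finset (Fin m)} {u v : Fin m → ℝ}

lemma l1_eq_sum_E (hu : PosOn E u) : l1 u = ∑ i ∈ E, u i := by
  unfold l1
  rw [← Finset.sum_subset (Finset.subset_univ E)]
  · exact Finset.sum_congr rfl fun i hi => abs_of_pos (hu.1 i hi)
  · intro i _ hi
    simp [hu.2 i hi]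

lemma l1_pos (hE : E.Nonempty) (hu : PosOn E u) : 0 < l1 u := by
  rw [l1_eq_sum_E hu]
  exact Finset.sum_pos (fun i hi => hu.1 i hi) hE

lemma l1_smul (c : ℝ) (v : Fin m → ℝ) : l1 (c • v) = |c| * l1 v := by
  unfold l1
  rw [Finset.mul_sum]
  exact Finset.sum_congr rfl fun i _ => by simp [abs_mul]

/-- coordinatewise closeness from dH, for normalized vectors -/
lemma coord_bound (hE : E.Nonempty) (hu : PosOn E u) (hv : PosOn E v)
    (hu1 : l1 u = 1) (hv1 : l1 v = 1) :
    (∀ i, |u i - v i| ≤ Real.exp (dH E hE u v) - 1) ∧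
    (∀ i ∈ E, v i ≤ Real.exp (dH E hE u v) * u i) := by
  set a := E.sup' hE fun i => u i / v i with ha
  set b := E.sup' hE fun i => v i / u i with hb
  have hap : 0 < a := sup'_ratio_pos hE hu hv
  have hbp : 0 < b := sup'_ratio_pos hE hv hu
  have hexp : Real.exp (dH E hE u v) = a * b := exp_dH hE hu hv
  have hua : ∀ i ∈ E, u i ≤ a * v i := by
    intro i hi
    have := Finset.le_sup' (fun i => u i / v i) hi
    rw [← ha] at this
    calc u i = (u i / v i) * v i := by field_simp [(hv.1 i hi).ne']
    _ ≤ a * v i := mul_le_mul_of_nonneg_right this (hv.1 i hi).le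
  have hvb : ∀ i ∈ E, v i ≤ b * u i := by
    intro i hi
    have := Finset.le_sup' (fun i => v i / u i) hi
    rw [← hb] at this
    calc v i = (v i / u i) * u i := by field_simp [(hu.1 i hi).ne']
    _ ≤ b * u i := mul_le_mul_of_nonneg_right this (hu.1 i hi).le
  have ha1 : 1 ≤ a := by
    have h : l1 u ≤ a * l1 v := by
      rw [l1_eq_sum_E hu, l1_eq_sum_E hv, Finset.mul_sum]
      exact Finset.sum_le_sum hua
    rw [hu1, hv1] at h
    linarith
  have hb1 : 1 ≤ b := by
    have h : l1 v ≤ b * l1 u := by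
      rw [l1_eq_sum_E hv, l1_eq_sum_E hu, Finset.mul_sum]
      exact Finset.sum_le_sum hvb
    rw [hu1, hv1] at h
    linarith
  constructor
  · intro i
    rw [hexp]
    by_cases hi : i ∈ E
    · have hvle1 : v i ≤ 1 := by
        rw [← hv1, l1_eq_sum_E hv]
        exact Finset.single_le_sum (fun j hj => (hv.1 j hj).le) hi
      have hule1 : u i ≤ 1 := by
        rw [← hu1, l1_eq_sum_E hu]
        exact Finset.single_le_sum (fun j hj => (hu.1 j hj).le) hi
      rw [abs_sub_le_iff]
      constructor
      · have := hua i hi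
        nlinarith [(hv.1 i hi).le]
      · have := hvb i hi
        nlinarith [(hu.1 i hi).le]
    · rw [hu.2 i hi, hv.2 i hi]
      simp
      nlinarith
  · intro i hi
    rw [hexp]
    calc v i ≤ b * u i := hvb i hi
    _ ≤ a * b * u i := mul_le_mul_of_nonneg_right (le_mul_of_one_le_left hbp.le ha1) (hu.1 i hi).le
end cmp

section matstruct
variable {A : Type*} {m : ℕ}

lemma Mprod_nonneg (M : A → Matrix (Fin m) (Fin m) ℝ) (hM : ∀ a i j, 0 ≤ M a i j)
    (w : List A) : ∀ i j, 0 ≤ Mprod M w i j := by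
  induction w with
  | nil =>
    intro i j
    simp only [Mprod, List.map_nil, List.prod_nil]
    by_cases h : i = j <;> simp [Matrix.one_apply, h]
  | cons a w ih =>
    intro i j
    have : Mprod M (a :: w) = M a * Mprod M w := by
      simp [Mprod, List.map_cons, List.prod_cons]
    rw [this, Matrix.mul_apply]
    exact Finset.sum_nonneg fun k _ => mul_nonneg (hM a i k) (ih k j)

lemma vecMul_indicator (N : Matrix (Fin m) (Fin m) ℝ) (E : Finset (Fin m)) (j : Fin m) :
    Matrix.vecMul (fun i => if i ∈ E then (1 : ℝ) else 0) N j = ∑ i ∈ E, N i j := by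
  simp only [Matrix.vecMul, dotProduct, ite_mul, one_mul, zero_mul]
  rw [Finset.sum_ite_mem, Finset.univ_inter]

lemma supp_eq_iff {v : Fin m → ℝ} {E : Finset (Fin m)} :
    supp v = E ↔ ∀ j, 0 < v j ↔ j ∈ E := by
  constructor
  · intro h j
    rw [← h]
    simp [supp]
  · intro h
    ext j
    simp [supp, h j]

variable {M : A → Matrix (Fin m) (Fin m) ℝ} {E : Finset (Fin m)} {w : List A}

lemma hErows (hw : PseudoMixes M E w) :
    ∀ j, (0 < ∑ i ∈ E, Mprod M w i j) ↔ j ∈ E := by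
  intro j
  have h := hw.1
  rw [Eact, supp_eq_iff] at h
  rw [← vecMul_indicator]
  exact h j

lemma hrow (hM : ∀ a i j, 0 ≤ M a i j) (hw : PseudoMixes M E w) :
    ∀ i ∈ E, (∀ j, 0 < Mprod M w i j ↔ j ∈ E) ∨ ∀ j, Mprod M w i j = 0 := by
  intro i hi
  have key : ∀ j, Matrix.vecMul (fun i' => if i' ∈ ({i} : Finset (Fin m)) then (1:ℝ) else 0)
      (Mprod M w) j = Mprod M w i j := by
    intro j
    rw [vecMul_indicator]
    simp
  rcases hw.2 i hi with h | h
  · left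
    intro j
    rw [Eact, supp_eq_iff] at h
    rw [← key j]
    exact h j
  · right
    intro j
    rw [Eact, supp_eq_iff] at h
    have h2 : ¬ (0 < Matrix.vecMul (fun i' => if i' ∈ ({i} : Finset (Fin m)) then (1:ℝ) else 0)
        (Mprod M w) j) := by
      rw [h j]; exact Finset.notMem_empty j
    rw [key j] at h2
    exact le_antisymm (not_lt.mp h2) (Mprod_nonneg M hM w i j)
end matstruct

section Npart
variable {m : ℕ} {E : Finset (Fin m)} {N : Matrix (Fin m) (Fin m) ℝ}

lemma vecMul_apply' (v : Fin m → ℝ) (N : Matrix (Fin m) (Fin m) ℝ) (j : Fin m) :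
    Matrix.vecMul v N j = ∑ i, v i * N i j := by
  simp [Matrix.vecMul, dotProduct]

lemma posOn_nonneg {v : Fin m → ℝ} (hv : PosOn E v) : ∀ k, 0 ≤ v k := fun k => by
  by_cases hk : k ∈ E
  · exact (hv.1 k hk).le
  · exact (hv.2 k hk).ge

lemma T_posOn (hN : ∀ i j, 0 ≤ N i j) (hEr : ∀ j, (0 < ∑ i ∈ E, N i j) ↔ j ∈ E)
    {v : Fin m → ℝ} (hv : PosOn E v) : PosOn E (Matrix.vecMul v N) := by
  have hvnn := posOn_nonneg hv
  constructor
  · intro j hj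
    obtain ⟨i, hiE, hipos⟩ : ∃ i ∈ E, 0 < N i j := by
      by_contra hcon
      push_neg at hcon
      have h1 : ∑ i ∈ E, N i j ≤ 0 := Finset.sum_nonpos fun i hi => hcon i hi
      have h2 := (hEr j).mpr hj
      linarith
    rw [vecMul_apply']
    exact lt_of_lt_of_le (mul_pos (hv.1 i hiE) hipos)
      (Finset.single_le_sum (fun k _ => mul_nonneg (hvnn k) (hN k j)) (Finset.mem_univ i))
  · intro j hj
    have hz : ∀ i ∈ E, N i j = 0 := by
      have h1 : ¬ (0 < ∑ i ∈ E, N i j) := fun h => hj ((hEr j).mp h)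
      have h2 : ∑ i ∈ E, N i j = 0 :=
        le_antisymm (not_lt.mp h1) (Finset.sum_nonneg fun i _ => hN i j)
      exact fun i hi => (Finset.sum_eq_zero_iff_of_nonneg (fun i _ => hN i j)).mp h2 i hi
    rw [vecMul_apply']
    apply Finset.sum_eq_zero
    intro i _
    by_cases hi : i ∈ E
    · rw [hz i hi, mul_zero]
    · rw [hv.2 i hi, zero_mul]

lemma diam_bound (hE : E.Nonempty) (hN : ∀ i j, 0 ≤ N i j)
    (hEr : ∀ j, (0 < ∑ i ∈ E, N i j) ↔ j ∈ E)
    (hr : ∀ i ∈ E, (∀ j, 0 < N i j ↔ j ∈ E) ∨ ∀ j, N i j = 0) :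
    ∃ D : ℝ, 0 ≤ D ∧ ∀ u v : Fin m → ℝ, PosOn E u → PosOn E v →
      dH E hE (Matrix.vecMul u N) (Matrix.vecMul v N) ≤ D := by
  classical
  set S : Finset (Fin m) := E.filter fun i => ∃ j, 0 < N i j with hSdef
  obtain ⟨j0, hj0⟩ := id hE
  have hS : S.Nonempty := by
    obtain ⟨i, hiE, hipos⟩ : ∃ i ∈ E, 0 < N i j0 := by
      by_contra hcon
      push_neg at hcon
      have h1 : ∑ i ∈ E, N i j0 ≤ 0 := Finset.sum_nonpos fun i hi => hcon i hi
      have h2 := (hEr j0).mpr hj0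
      linarith
    exact ⟨i, Finset.mem_filter.mpr ⟨hiE, ⟨j0, hipos⟩⟩⟩
  have hSE : S ⊆ E := Finset.filter_subset _ _
  have hSpos : ∀ i ∈ S, ∀ j ∈ E, 0 < N i j := by
    intro i hi j hj
    obtain ⟨hiE, j', hj'⟩ := Finset.mem_filter.mp hi
    rcases hr i hiE with h | h
    · exact (h j).mpr hj
    · rw [h j'] at hj'; exact absurd hj' (lt_irrefl 0)
  have hSzero : ∀ i ∈ E, i ∉ S → ∀ j, N i j = 0 := by
    intro i hiE hiS j
    rw [hSdef, Finset.mem_filter] at hiS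
    push_neg at hiS
    exact le_antisymm (hiS hiE j) (hN i j)
  have hTsum : ∀ (v : Fin m → ℝ), PosOn E v → ∀ j,
      Matrix.vecMul v N j = ∑ i ∈ S, v i * N i j := by
    intro v hv j
    rw [vecMul_apply']
    symm
    apply Finset.sum_subset (Finset.subset_univ S)
    intro i _ hiS
    by_cases hiE : i ∈ E
    · rw [hSzero i hiE hiS, mul_zero]
    · rw [hv.2 i hiE, zero_mul]
  have hbpos : ∀ j ∈ E, (0:ℝ) < S.inf' hS fun i => N i j := by
    intro j hj
    rw [Finset.lt_inf'_iff]
    exact fun i hi => hSpos i hi j hj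
  have hapos : ∀ j ∈ E, (0:ℝ) < S.sup' hS fun i => N i j := by
    intro j hj
    obtain ⟨i, hi⟩ := id hS
    exact lt_of_lt_of_le (hSpos i hi j hj) (Finset.le_sup' (fun i => N i j) hi)
  set C : ℝ := E.sup' hE fun j => (S.sup' hS fun i => N i j) / (S.inf' hS fun i => N i j)
    with hCdef
  have hC1 : 1 ≤ C := by
    apply le_trans _ (Finset.le_sup'
      (fun j => (S.sup' hS fun i => N i j) / (S.inf' hS fun i => N i j)) hj0)
    rw [le_div_iff₀ (hbpos j0 hj0), one_mul]
    obtain ⟨i, hi⟩ := id hS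
    exact le_trans (Finset.inf'_le (fun i => N i j0) hi) (Finset.le_sup' (fun i => N i j0) hi)
  have hC0 : 0 < C := lt_of_lt_of_le one_pos hC1
  refine ⟨2 * Real.log C, mul_nonneg (by norm_num) (Real.log_nonneg hC1), ?_⟩
  have key : ∀ u v : Fin m → ℝ, PosOn E u → PosOn E v →
      Real.log (E.sup' hE fun j => Matrix.vecMul u N j / Matrix.vecMul v N j) ≤
        Real.log (∑ i ∈ S, u i) - Real.log (∑ i ∈ S, v i) + Real.log C := by
    intro u v hu hv
    have hσu : 0 < ∑ i ∈ S, u i := Finset.sum_pos (fun i hi => hu.1 i (hSE hi)) hS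
    have hσv : 0 < ∑ i ∈ S, v i := Finset.sum_pos (fun i hi => hv.1 i (hSE hi)) hS
    have hTu := T_posOn hN hEr hu
    have hTv := T_posOn hN hEr hv
    have hsup : (E.sup' hE fun j => Matrix.vecMul u N j / Matrix.vecMul v N j) ≤
        ((∑ i ∈ S, u i) / (∑ i ∈ S, v i)) * C := by
      apply Finset.sup'_le
      intro j hj
      have hbj := hbpos j hj
      have haj := hapos j hj
      have h1 : Matrix.vecMul u N j ≤ (∑ i ∈ S, u i) * (S.sup' hS fun i => N i j) := by
        rw [hTsum u hu j, Finset.sum_mul]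
        exact Finset.sum_le_sum fun i hi =>
          mul_le_mul_of_nonneg_left (Finset.le_sup' (fun i => N i j) hi)
            (hu.1 i (hSE hi)).le
      have h2 : (∑ i ∈ S, v i) * (S.inf' hS fun i => N i j) ≤ Matrix.vecMul v N j := by
        rw [hTsum v hv j, Finset.sum_mul]
        exact Finset.sum_le_sum fun i hi =>
          mul_le_mul_of_nonneg_left (Finset.inf'_le (fun i => N i j) hi)
            (hv.1 i (hSE hi)).le
      have h3 : Matrix.vecMul u N j / Matrix.vecMul v N j ≤
          ((∑ i ∈ S, u i) * (S.sup' hS fun i => N i j)) /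
            ((∑ i ∈ S, v i) * (S.inf' hS fun i => N i j)) :=
        div_le_div₀ (by positivity) h1 (by positivity) h2
      refine h3.trans ?_
      have h4 : ((∑ i ∈ S, u i) * (S.sup' hS fun i => N i j)) /
          ((∑ i ∈ S, v i) * (S.inf' hS fun i => N i j)) =
          ((∑ i ∈ S, u i) / (∑ i ∈ S, v i)) *
            ((S.sup' hS fun i => N i j) / (S.inf' hS fun i => N i j)) :=
        (div_mul_div_comm _ _ _ _).symm
      rw [h4]
      exact mul_le_mul_of_nonneg_left
        (Finset.le_sup' (fun j => (S.sup' hS fun i => N i j) / (S.inf' hS fun i => N i j)) hj)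
        (div_nonneg hσu.le hσv.le)
    have hsupPos : (0:ℝ) < E.sup' hE fun j => Matrix.vecMul u N j / Matrix.vecMul v N j :=
      sup'_ratio_pos hE hTu hTv
    calc Real.log (E.sup' hE fun j => Matrix.vecMul u N j / Matrix.vecMul v N j)
        ≤ Real.log (((∑ i ∈ S, u i) / (∑ i ∈ S, v i)) * C) := Real.log_le_log hsupPos hsup
      _ = Real.log (∑ i ∈ S, u i) - Real.log (∑ i ∈ S, v i) + Real.log C := by
          rw [Real.log_mul (by positivity) hC0.ne', Real.log_div hσu.ne' hσv.ne']
  intro u v hu hv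
  have k1 := key u v hu hv
  have k2 := key v u hv hu
  rw [dH]
  linarith
end Npart

open Filter Topology in
lemma tendsto_sup'' {ι : Type*} (s : Finset ι) (hs : s.Nonempty) (f : ℕ → ι → ℝ) (g : ι → ℝ)
    (h : ∀ i ∈ s, Tendsto (fun l => f l i) atTop (𝓝 (g i))) :
    Tendsto (fun l => s.sup' hs fun i => f l i) atTop (𝓝 (s.sup' hs g)) := by
  induction hs using Finset.Nonempty.cons_induction with
  | singleton a => simpa using h a (Finset.mem_singleton_self a)
  | cons a s ha hs ih =>
    simp only [Finset.sup'_cons hs]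
    exact (h a (Finset.mem_cons_self a s)).max
      (ih fun i hi => h i (Finset.mem_cons_of_mem hi))

open Filter Topology in
lemma dH_tendsto {m : ℕ} {E : Finset (Fin m)} (hE : E.Nonempty) {u x : Fin m → ℝ}
    (hu : PosOn E u) (hx : PosOn E x) (y : ℕ → Fin m → ℝ)
    (hy : ∀ i, Tendsto (fun l => y l i) atTop (𝓝 (x i))) :
    Tendsto (fun l => dH E hE u (y l)) atTop (𝓝 (dH E hE u x)) := by
  have t1 : Tendsto (fun l => E.sup' hE fun i => u i / y l i) atTop
      (𝓝 (E.sup' hE fun i => u i / x i)) := by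
    apply tendsto_sup'' E hE _ _
    intro i hi
    exact Tendsto.div tendsto_const_nhds (hy i) (hx.1 i hi).ne'
  have t2 : Tendsto (fun l => E.sup' hE fun i => y l i / u i) atTop
      (𝓝 (E.sup' hE fun i => x i / u i)) := by
    apply tendsto_sup'' E hE _ _
    intro i hi
    exact Tendsto.div_const (hy i) (u i)
  have l1t : Tendsto (fun l => Real.log (E.sup' hE fun i => u i / y l i)) atTop
      (𝓝 (Real.log (E.sup' hE fun i => u i / x i))) :=
    ((Real.continuousAt_log (sup'_ratio_pos hE hu hx).ne').tendsto).comp t1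
  have l2t : Tendsto (fun l => Real.log (E.sup' hE fun i => y l i / u i)) atTop
      (𝓝 (Real.log (E.sup' hE fun i => x i / u i))) :=
    ((Real.continuousAt_log (sup'_ratio_pos hE hx hu).ne').tendsto).comp t2
  simpa only [dH] using l1t.add l2t

open Filter Topology

/-- Iterating a pseudo-mixing word with contraction factor `τ` drives all directions
exponentially fast to a single limit direction `x`. -/
theorem stmt8 {A : Type*} {m : ℕ}
    (M : A → Matrix (Fin m) (Fin m) ℝ) (hM : ∀ a i j, 0 ≤ M a i j)
    (E : Finset (Fin m)) (hE : E.Nonempty) (w : List A) (hw : PseudoMixes M E w)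
    (τ : ℝ) (hτ0 : 0 < τ) (hτ1 : τ < 1)
    (hcontr : ∀ u v : Fin m → ℝ, 0 ≤ u → 0 ≤ v → supp u = E → supp v = E →
      dH E hE (Matrix.vecMul u (Mprod M w)) (Matrix.vecMul v (Mprod M w)) ≤
        τ * dH E hE u v) :
    ∃ x : Fin m → ℝ, 0 ≤ x ∧ l1 x = 1 ∧ supp x = E ∧
      ∃ c > 0, ∀ k : ℕ, 1 ≤ k → ∀ v : Fin m → ℝ, 0 ≤ v → l1 v = 1 → supp v = E →
        dH E hE
          ((l1 (Matrix.vecMul v (Mprod M ((List.replicate k w).flatten))))⁻¹ •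
            Matrix.vecMul v (Mprod M ((List.replicate k w).flatten))) x ≤ c * τ ^ k := by
  classical
  have hNnn : ∀ i j, 0 ≤ Mprod M w i j := Mprod_nonneg M hM w
  have hEr := hErows hw
  have hr := hrow hM hw
  obtain ⟨D, hD0, hdiam⟩ := diam_bound hE hNnn hEr hr
  set T : (Fin m → ℝ) → (Fin m → ℝ) := fun v => Matrix.vecMul v (Mprod M w) with hT
  have hTpos : ∀ {v : Fin m → ℝ}, PosOn E v → PosOn E (T v) :=
    fun hv => T_posOn hNnn hEr hv
  have hTiterpos : ∀ n (v : Fin m → ℝ), PosOn E v → PosOn E (T^[n] v) := by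
    intro n
    induction n with
    | zero => intro v hv; simpa using hv
    | succ n ih =>
      intro v hv
      rw [Function.iterate_succ_apply']
      exact hTpos (ih v hv)
  have hcontr' : ∀ u v : Fin m → ℝ, PosOn E u → PosOn E v →
      dH E hE (T u) (T v) ≤ τ * dH E hE u v := by
    intro u v hu hv
    obtain ⟨hu0, hus⟩ := (posOn_iff E u).mp hu
    obtain ⟨hv0, hvs⟩ := (posOn_iff E v).mp hv
    exact hcontr u v hu0 hv0 hus hvs
  have hiter : ∀ n (u v : Fin m → ℝ), PosOn E u → PosOn E v →
      dH E hE (T^[n+1] u) (T^[n+1] v) ≤ τ ^ n * D := by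
    intro n
    induction n with
    | zero => intro u v hu hv; simpa [hT] using hdiam u v hu hv
    | succ n ih =>
      intro u v hu hv
      rw [Function.iterate_succ_apply' T (n+1) u, Function.iterate_succ_apply' T (n+1) v]
      calc dH E hE (T (T^[n+1] u)) (T (T^[n+1] v))
          ≤ τ * dH E hE (T^[n+1] u) (T^[n+1] v) :=
            hcontr' _ _ (hTiterpos (n+1) u hu) (hTiterpos (n+1) v hv)
        _ ≤ τ * (τ ^ n * D) := mul_le_mul_of_nonneg_left (ih u v hu hv) hτ0.le
        _ = τ ^ (n+1) * D := by ring
  -- reference vector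
  set v0 : Fin m → ℝ := fun i => if i ∈ E then (1:ℝ) else 0 with hv0
  have hv0pos : PosOn E v0 := by
    constructor
    · intro i hi; simp [hv0, hi]
    · intro i hi; simp [hv0, hi]
  set U : ℕ → (Fin m → ℝ) := fun n => T^[n+1] v0 with hUdef
  have hUpos : ∀ n, PosOn E (U n) := fun n => hTiterpos (n+1) v0 hv0pos
  have hlU : ∀ n, 0 < l1 (U n) := fun n => l1_pos hE (hUpos n)
  set y : ℕ → (Fin m → ℝ) := fun n => (l1 (U n))⁻¹ • U n with hy
  have hypos : ∀ n, PosOn E (y n) := fun n => posOn_smul (inv_pos.mpr (hlU n)) (hUpos n)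
  have hyl1 : ∀ n, l1 (y n) = 1 := by
    intro n
    rw [hy, l1_smul, abs_of_pos (inv_pos.mpr (hlU n)), inv_mul_cancel₀ (hlU n).ne']
  have hydH : ∀ n l, dH E hE (y n) (y l) = dH E hE (U n) (U l) := by
    intro n l
    rw [hy]
    rw [dH_smul_left hE (inv_pos.mpr (hlU n)) (hUpos n)
      (posOn_smul (inv_pos.mpr (hlU l)) (hUpos l)), dH_symm hE,
      dH_smul_left hE (inv_pos.mpr (hlU l)) (hUpos l) (hUpos n), dH_symm hE]
  have hUdH : ∀ (N n l : ℕ), N ≤ n → N ≤ l → dH E hE (U n) (U l) ≤ τ ^ N * D := by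
    intro N n l hn hl
    have e1 : U n = T^[N+1] (T^[n-N] v0) := by
      rw [hUdef, ← Function.iterate_add_apply,
        show N+1+(n-N) = n+1 from by omega]
    have e2 : U l = T^[N+1] (T^[l-N] v0) := by
      rw [hUdef, ← Function.iterate_add_apply,
        show N+1+(l-N) = l+1 from by omega]
    rw [e1, e2]
    exact hiter N _ _ (hTiterpos _ v0 hv0pos) (hTiterpos _ v0 hv0pos)
  -- Cauchy
  have hb0 : ∀ N : ℕ, (0:ℝ) ≤ Real.exp (τ ^ N * D) - 1 := by
    intro N
    have : (1:ℝ) ≤ Real.exp (τ ^ N * D) := by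
      rw [← Real.exp_zero]
      exact Real.exp_le_exp.mpr (by positivity)
    linarith
  have hcauchy : CauchySeq y := by
    apply cauchySeq_of_le_tendsto_0 (fun N => Real.exp (τ ^ N * D) - 1)
    · intro n l N hn hl
      rw [dist_pi_le_iff (hb0 N)]
      intro i
      rw [Real.dist_eq]
      have h1 := (coord_bound hE (hypos n) (hypos l) (hyl1 n) (hyl1 l)).1 i
      have h2 : dH E hE (y n) (y l) ≤ τ ^ N * D := by
        rw [hydH]; exact hUdH N n l hn hl
      have := Real.exp_le_exp.mpr h2
      linarith
    · have hpow : Tendsto (fun N : ℕ => τ ^ N * D) atTop (𝓝 0) := by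
        simpa using (tendsto_pow_atTop_nhds_zero_of_lt_one hτ0.le hτ1).mul_const D
      have h1 : Tendsto (fun N : ℕ => Real.exp (τ ^ N * D)) atTop (𝓝 1) := by
        simpa [Function.comp_def] using (Real.continuous_exp.tendsto 0).comp hpow
      simpa using h1.sub_const 1
  obtain ⟨x, hx⟩ := cauchySeq_tendsto_of_complete hcauchy
  have hxi : ∀ i, Tendsto (fun n => y n i) atTop (𝓝 (x i)) := by
    intro i
    exact ((continuous_apply i).tendsto x).comp hx
  -- x properties
  have hx0 : (0:Fin m → ℝ) ≤ x := by
    intro i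
    exact ge_of_tendsto (hxi i) (Eventually.of_forall fun n => posOn_nonneg (hypos n) i)
  have hxl1 : l1 x = 1 := by
    have hl1t : Tendsto (fun n => l1 (y n)) atTop (𝓝 (l1 x)) := by
      unfold l1
      exact tendsto_finset_sum _ fun i _ => (hxi i).abs
    have hl1t' : Tendsto (fun n => l1 (y n)) atTop (𝓝 1) := by
      simpa [hyl1] using tendsto_const_nhds (α := ℝ) (x := (1:ℝ))
    exact tendsto_nhds_unique hl1t hl1t'
  have hxpos : PosOn E x := by
    constructor
    · intro i hi
      have hbound : ∀ n, y 0 i ≤ Real.exp D * y n i := by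
        intro n
        have h1 := (coord_bound hE (hypos n) (hypos 0) (hyl1 n) (hyl1 0)).2 i hi
        have h2 : dH E hE (y n) (y 0) ≤ D := by
          rw [hydH]
          simpa using hUdH 0 n 0 (Nat.zero_le n) le_rfl
        have h3 := Real.exp_le_exp.mpr h2
        calc y 0 i ≤ Real.exp (dH E hE (y n) (y 0)) * y n i := h1
          _ ≤ Real.exp D * y n i :=
            mul_le_mul_of_nonneg_right h3 (posOn_nonneg (hypos n) i)
      have hlim : y 0 i ≤ Real.exp D * x i :=
        ge_of_tendsto ((hxi i).const_mul (Real.exp D)) (Eventually.of_forall hbound)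
      have hy0pos := (hypos 0).1 i hi
      nlinarith [Real.exp_pos D]
    · intro i hi
      have hz : ∀ n, y n i = 0 := fun n => (hypos n).2 i hi
      have h0 : Tendsto (fun n => y n i) atTop (𝓝 0) := by
        simp only [hz]
        exact tendsto_const_nhds
      exact tendsto_nhds_unique (hxi i) h0
  have hyx : ∀ n, dH E hE (y n) x ≤ τ ^ n * D := by
    intro n
    have ht : Tendsto (fun l => dH E hE (y n) (y l)) atTop (𝓝 (dH E hE (y n) x)) :=
      dH_tendsto hE (hypos n) hxpos y hxi
    apply le_of_tendsto ht
    rw [eventually_atTop]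
    exact ⟨n, fun l hl => by rw [hydH]; exact hUdH n n l le_rfl hl⟩
  -- assemble
  obtain ⟨hx0', hxsupp⟩ := (posOn_iff E x).mp hxpos
  refine ⟨x, hx0, hxl1, hxsupp, 2 * (D + 1) / τ, by positivity, ?_⟩
  intro k hk v hv0 hvl1 hvsupp
  have hvpos : PosOn E v := (posOn_iff E v).mpr ⟨hv0, hvsupp⟩
  obtain ⟨n, rfl⟩ : ∃ n, k = n + 1 := ⟨k - 1, by omega⟩
  have hz : Matrix.vecMul v (Mprod M ((List.replicate (n+1) w).flatten)) = T^[n+1] v := by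
    clear_value T
    subst hT
    clear * -
    induction n generalizing v with
    | zero =>
      simp [Mprod, Matrix.vecMul_one]
    | succ n ih =>
      have : (List.replicate (n+2) w).flatten = w ++ (List.replicate (n+1) w).flatten := by
        rw [List.replicate_succ, List.flatten_cons]
      rw [this]
      have hmp : Mprod M (w ++ (List.replicate (n+1) w).flatten) =
          Mprod M w * Mprod M ((List.replicate (n+1) w).flatten) := by
        simp [Mprod, List.map_append, List.prod_append]
      rw [hmp, ← Matrix.vecMul_vecMul, ih]
      exact (Function.iterate_succ_apply _ (n+1) v).symm
  rw [hz]
  have hzpos : PosOn E (T^[n+1] v) := hTiterpos (n+1) v hvpos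
  rw [dH_smul_left hE (inv_pos.mpr (l1_pos hE hzpos)) hzpos hxpos]
  have h1 : dH E hE (T^[n+1] v) (U n) ≤ τ ^ n * D := hiter n v v0 hvpos hv0pos
  have h2 : dH E hE (U n) x ≤ τ ^ n * D := by
    have := hyx n
    rw [hy, dH_smul_left hE (inv_pos.mpr (hlU n)) (hUpos n) hxpos] at this
    exact this
  have htri : dH E hE (T^[n+1] v) x ≤ dH E hE (T^[n+1] v) (U n) + dH E hE (U n) x :=
    dH_triangle hE hzpos (hUpos n) hxpos
  have hτn : (0:ℝ) < τ ^ n := pow_pos hτ0 n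
  have hceq : 2 * (D + 1) / τ * τ ^ (n+1) = 2 * (D + 1) * τ ^ n := by
    field_simp
    ring
  rw [hceq]
  nlinarith [hτn]
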